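/- Let $a>0$, $\sigma>0$, $p\in(0,1)$, $\rho\in[-1,1]$, $\beta\in\mathbb{R}$ with $a-p\beta\rho\sigma+\sigma^2/2>0$. Define $\eta=\frac{1}{\sigma^2}\left(\sqrt{(a-p\beta\rho\sigma+\sigma^2/2)^2+p(1-p)\beta^2\sigma^2}-(a-p\beta\rho\sigma+\sigma^2/2)\right)$ and $b>0$. Then $\phi(\nu)=\nu^{-\eta}$ satisfies $\frac{1}{2}\sigma^2\nu^3\phi''(\nu)+(b-(a-p\beta\rho\sigma)\nu)\nu\,\phi'(\nu)-\frac{1}{2}p(1-p)\beta^2\nu\,\phi(\nu)=-b\eta\,\phi(\nu)$ for all $\nu>0$. -/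

import Mathlib

theorem stmt_15 (a b σ p β ρ : ℝ) (ha : 0 < a) (hb : 0 < b) (hσ : 0 < σ)
    (hp : p ∈ Set.Ioo (0:ℝ) 1) (hρ : ρ ∈ Set.Icc (-1:ℝ) 1)
    (hd : 0 < a - p*β*ρ*σ + σ^2/2)
    (η : ℝ)
    (hη : η = (Real.sqrt ((a - p*β*ρ*σ + σ^2/2)^2 + p*(1-p)*β^2*σ^2)
        - (a - p*β*ρ*σ + σ^2/2)) / σ^2)
    (φ : ℝ → ℝ) (hφ : ∀ ν : ℝ, φ ν = ν ^ (-η)) :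
    ∀ ν > (0:ℝ), (1/2)*σ^2*ν^3*deriv (deriv φ) ν + (b - (a - p*β*ρ*σ)*ν)*ν*deriv φ ν
      - (1/2)*p*(1-p)*β^2*ν*φ ν = -(b*η)*φ ν := by
  have hφe : φ = fun ν : ℝ => ν ^ (-η) := funext hφ
  subst hφe
  obtain ⟨hp0, hp1⟩ := hp
  set D : ℝ := a - p*β*ρ*σ + σ^2/2 with hD
  have hσ2 : (σ:ℝ)^2 ≠ 0 := by positivity
  have hS : 0 ≤ D^2 + p*(1-p)*β^2*σ^2 := by
    have h1p : 0 ≤ 1 - p := by linarith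
    have := mul_nonneg (mul_nonneg (mul_nonneg hp0.le h1p) (sq_nonneg β)) (sq_nonneg σ)
    nlinarith [sq_nonneg D]
  have heq : σ^2 * η + D = Real.sqrt (D^2 + p*(1-p)*β^2*σ^2) := by
    rw [hη]; field_simp; ring
  have h2 : (σ^2 * η + D)^2 = D^2 + p*(1-p)*β^2*σ^2 := by
    rw [heq]; exact Real.sq_sqrt hS
  have hkey' : σ^2 * (σ^2*η^2 + 2*D*η - p*(1-p)*β^2) = 0 := by linear_combination h2
  have hkey : σ^2*η^2 + 2*D*η - p*(1-p)*β^2 = 0 :=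
    (mul_eq_zero.mp hkey').resolve_left hσ2
  intro ν hν
  -- first derivative on Ioi 0
  have hd1 : ∀ x : ℝ, 0 < x →
      HasDerivAt (fun y : ℝ => y ^ (-η)) ((-η) * x ^ (-η - 1)) x := fun x hx =>
    Real.hasDerivAt_rpow_const (Or.inl (ne_of_gt hx))
  have hder1 : ∀ x : ℝ, 0 < x → deriv (fun y : ℝ => y ^ (-η)) x = (-η) * x ^ (-η - 1) :=
    fun x hx => (hd1 x hx).deriv
  have hev : deriv (fun y : ℝ => y ^ (-η)) =ᶠ[nhds ν]
      (fun x : ℝ => (-η) * x ^ (-η - 1)) := by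
    filter_upwards [Ioi_mem_nhds hν] with x hx using hder1 x hx
  have hd2 : HasDerivAt (fun x : ℝ => (-η) * x ^ (-η - 1))
      ((-η) * ((-η - 1) * ν ^ (-η - 1 - 1))) ν :=
    (Real.hasDerivAt_rpow_const (Or.inl (ne_of_gt hν))).const_mul (-η)
  have hder2 : deriv (deriv (fun y : ℝ => y ^ (-η))) ν
      = (-η) * ((-η - 1) * ν ^ (-η - 1 - 1)) := by
    rw [hev.deriv_eq]; exact hd2.deriv
  rw [hder2, hder1 ν hν]
  have e1 : ν ^ (-η - 1) = ν ^ (-η) / ν := by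
    rw [Real.rpow_sub hν, Real.rpow_one]
  have e2 : ν ^ (-η - 1 - 1) = ν ^ (-η) / ν^2 := by
    rw [Real.rpow_sub hν, Real.rpow_sub hν, Real.rpow_one]; ring
  rw [e1, e2]
  have hν' : ν ≠ 0 := ne_of_gt hν
  have hkey2 : σ^2*η^2 + 2*(a - p*β*ρ*σ + σ^2/2)*η - p*(1-p)*β^2 = 0 := by
    rw [← hD]; exact hkey
  field_simp
  linear_combination ν * hkey2
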